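/- Let 0 ≤ a < b be real numbers and let Δ be a map on signals such that for every signal x in L²[0,∞), the image Δx is again a signal in L²[0,∞), and which satisfies the slope inequality: for all τ ∈ ℝ and all signals x in L²[0,∞), with y := Δx, ∫₀^∞ (x − b⁻¹y)(t+τ)·(−a·x + y)(t) dt ≤ ∫₀^∞ (x − b⁻¹y)(t)·(−a·x + y)(t) dt. Then for every θ ∈ [0,1], the map x ↦ θ·(Δx) + (1−θ)·a·x also satisfies the same slope inequality (with y replaced by θ·(Δx) + (1−θ)·a·x). -/

import Mathlib

open MeasureTheory Set

/-- A signal in L²[0,∞): square integrable over ℝ and vanishing on (−∞,0). -/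
def IsSignal (x : ℝ → ℝ) : Prop :=
  MemLp x 2 volume ∧ ∀ t < (0:ℝ), x t = 0

/-- The [a,b]-slope shift inequality for a map `Δ` on signals. -/
def SlopeIneq (a b : ℝ) (Δ : (ℝ → ℝ) → (ℝ → ℝ)) : Prop :=
  ∀ (τ : ℝ) (x : ℝ → ℝ), IsSignal x →
    ∫ t in Ici (0:ℝ), (x (t + τ) - b⁻¹ * Δ x (t + τ)) * (-a * x t + Δ x t)
      ≤ ∫ t in Ici (0:ℝ), (x t - b⁻¹ * Δ x t) * (-a * x t + Δ x t)


lemma mul_int {f g : ℝ → ℝ} (hf : MemLp f 2 volume) (hg : MemLp g 2 volume) :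
    Integrable (fun t => f t * g t) volume := by
  have h1 := (hf.add hg).integrable_sq
  have h2 := hf.integrable_sq
  have h3 := hg.integrable_sq
  have he : (fun t => f t * g t) = fun t => ((f t + g t)^2 - (f t)^2 - (g t)^2)/2 := by
    funext t; ring
  rw [he]; exact ((h1.sub h2).sub h3).div_const 2

lemma shift_memLp {f : ℝ → ℝ} (hf : MemLp f 2 volume) (τ : ℝ) :
    MemLp (fun t => f (t + τ)) 2 volume :=
  hf.comp_measurePreserving (measurePreserving_add_right volume τ)

lemma shift_int_eq {f : ℝ → ℝ} (τ : ℝ) :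
    ∫ t, f (t + τ) = ∫ t, f t := by
  exact integral_add_right_eq_self f τ

lemma cs_shift {f : ℝ → ℝ} (hf : MemLp f 2 volume) (τ : ℝ) :
    ∫ t, f (t + τ) * f t ≤ ∫ t, f t * f t := by
  have hshift := shift_memLp hf τ
  have hsq1 : Integrable (fun t => f (t+τ) * f (t+τ)) volume := mul_int hshift hshift
  have hsq2 : Integrable (fun t => f t * f t) volume := mul_int hf hf
  have hcross : Integrable (fun t => f (t+τ) * f t) volume := mul_int hshift hf
  have h0 : 0 ≤ ∫ t, (f (t+τ) - f t)^2 :=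
    integral_nonneg fun t => sq_nonneg _
  have hexp : ∫ t, (f (t+τ) - f t)^2
      = (∫ t, f (t+τ) * f (t+τ)) - 2 * (∫ t, f (t+τ) * f t) + ∫ t, f t * f t := by
    have : (fun t => (f (t+τ) - f t)^2)
        = fun t => f (t+τ) * f (t+τ) - 2 * (f (t+τ) * f t) + f t * f t := by
      funext t; ring
    rw [this, integral_add (by exact (hsq1.sub (hcross.const_mul 2))) hsq2,
      integral_sub hsq1 (hcross.const_mul 2), integral_const_mul]
  have heq : ∫ t, f (t+τ) * f (t+τ) = ∫ t, f t * f t := shift_int_eq (f := fun t => f t * f t) τ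
  rw [hexp, heq] at h0
  linarith

theorem slope_ineq_homotopy
    (a b : ℝ) (ha : 0 ≤ a) (hab : a < b)
    (Δ : (ℝ → ℝ) → (ℝ → ℝ))
    (hΔ : ∀ x, IsSignal x → IsSignal (Δ x))
    (hslope : SlopeIneq a b Δ) :
    ∀ θ : ℝ, θ ∈ Icc (0:ℝ) 1 →
      SlopeIneq a b (fun x => fun t => θ * Δ x t + (1 - θ) * a * x t) := by
  intro θ hθ τ x hx
  obtain ⟨hθ0, hθ1⟩ := hθ
  have hb : 0 < b := lt_of_le_of_lt ha hab
  have hxm := hx.1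
  have hym := (hΔ x hx).1
  set y : ℝ → ℝ := Δ x with hy
  set u : ℝ → ℝ := fun t => x t - b⁻¹ * y t with hu
  set v : ℝ → ℝ := fun t => -a * x t + y t with hv
  have hum : MemLp u 2 volume := hxm.sub (hym.const_mul _)
  have hvm : MemLp v 2 volume := (hxm.const_mul (-a)).add hym
  have hv0 : ∀ t < (0:ℝ), v t = 0 := by
    intro t ht
    simp [hv, hy, hx.2 t ht, (hΔ x hx).2 t ht]
  set c : ℝ := θ * (1 - θ) * b⁻¹ with hc
  have hc0 : 0 ≤ c := by
    have : 0 ≤ (1 - θ) := by linarith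
    positivity
  have key : ∀ s t : ℝ,
      (x s - b⁻¹ * (θ * y s + (1 - θ) * a * x s)) * (-a * x t + (θ * y t + (1 - θ) * a * x t))
        = θ * (u s * v t) + c * (v s * v t) := by
    intro s t
    simp only [hu, hv, hc]
    ring
  -- integrability
  have huτv : Integrable (fun t => u (t + τ) * v t) volume := mul_int (shift_memLp hum τ) hvm
  have huv : Integrable (fun t => u t * v t) volume := mul_int hum hvm
  have hvτv : Integrable (fun t => v (t + τ) * v t) volume := mul_int (shift_memLp hvm τ) hvm
  have hvv : Integrable (fun t => v t * v t) volume := mul_int hvm hvm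
  -- split integrals
  have split : ∀ (w : ℝ → ℝ), Integrable (fun t => w t * v t) volume →
      Integrable (fun t => v t * v t) volume →
      ∫ t in Ici (0:ℝ), (θ * (w t * v t) + c * (v t * v t))
        = (θ * ∫ t in Ici (0:ℝ), w t * v t) + c * ∫ t in Ici (0:ℝ), v t * v t := by
    intro w hw hvv'
    rw [integral_add ((hw.integrableOn.const_mul θ)) ((hvv'.integrableOn.const_mul c)),
      integral_const_mul, integral_const_mul]
  have E1 : ∫ t in Ici (0:ℝ),
        (x (t + τ) - b⁻¹ * (θ * y (t + τ) + (1 - θ) * a * x (t + τ)))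
          * (-a * x t + (θ * y t + (1 - θ) * a * x t))
      = (θ * ∫ t in Ici (0:ℝ), u (t + τ) * v t) + c * ∫ t in Ici (0:ℝ), v (t + τ) * v t := by
    rw [show (fun t => (x (t + τ) - b⁻¹ * (θ * y (t + τ) + (1 - θ) * a * x (t + τ)))
          * (-a * x t + (θ * y t + (1 - θ) * a * x t)))
        = fun t => θ * (u (t + τ) * v t) + c * (v (t + τ) * v t) from funext fun t => key _ _]
    rw [integral_add ((huτv.integrableOn.const_mul θ)) ((hvτv.integrableOn.const_mul c)),
      integral_const_mul, integral_const_mul]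
  have E2 : ∫ t in Ici (0:ℝ),
        (x t - b⁻¹ * (θ * y t + (1 - θ) * a * x t))
          * (-a * x t + (θ * y t + (1 - θ) * a * x t))
      = (θ * ∫ t in Ici (0:ℝ), u t * v t) + c * ∫ t in Ici (0:ℝ), v t * v t := by
    rw [show (fun t => (x t - b⁻¹ * (θ * y t + (1 - θ) * a * x t))
          * (-a * x t + (θ * y t + (1 - θ) * a * x t)))
        = fun t => θ * (u t * v t) + c * (v t * v t) from funext fun t => key _ _]
    exact split _ huv hvv
  have hA : ∫ t in Ici (0:ℝ), u (t + τ) * v t ≤ ∫ t in Ici (0:ℝ), u t * v t := by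
    have := hslope τ x hx
    simpa [hu, hv, hy] using this
  have hB : ∫ t in Ici (0:ℝ), v (t + τ) * v t ≤ ∫ t in Ici (0:ℝ), v t * v t := by
    have e1 : ∫ t in Ici (0:ℝ), v (t + τ) * v t = ∫ t, v (t + τ) * v t :=
      setIntegral_eq_integral_of_forall_compl_eq_zero fun t ht => by
        rw [hv0 t (by simpa using ht)]; ring
    have e2 : ∫ t in Ici (0:ℝ), v t * v t = ∫ t, v t * v t :=
      setIntegral_eq_integral_of_forall_compl_eq_zero fun t ht => by
        rw [hv0 t (by simpa using ht)]; ring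
    rw [e1, e2]
    exact cs_shift hvm τ
  calc ∫ t in Ici (0:ℝ),
        (x (t + τ) - b⁻¹ * (θ * y (t + τ) + (1 - θ) * a * x (t + τ)))
          * (-a * x t + (θ * y t + (1 - θ) * a * x t))
      = (θ * ∫ t in Ici (0:ℝ), u (t + τ) * v t) + c * ∫ t in Ici (0:ℝ), v (t + τ) * v t := E1
    _ ≤ (θ * ∫ t in Ici (0:ℝ), u t * v t) + c * ∫ t in Ici (0:ℝ), v t * v t :=
        add_le_add (mul_le_mul_of_nonneg_left hA hθ0) (mul_le_mul_of_nonneg_left hB hc0)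
    _ = _ := E2.symm
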